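/- arXiv:1305.2088 — 2 statements merged into one kernel-verified Lean document; each statement's English description precedes it below -/
import Mathlib

section
/- For every fixed n ≥ 1, the function f(x) = μ({ω ∈ (0,1) irrational : a_k(ω) = x for some 1 ≤ k ≤ n}) is nonincreasing in x ∈ ℕ; that is, if x < y then f(x) ≥ f(y), where μ is the Gauss measure. -/
open MeasureTheory Filter

/-- The Gauss map `T(x) = 1/x mod 1`. -/
noncomputable def gaussMap (x : ℝ) : ℝ := Int.fract (1 / x)

/-- The `n`-th partial quotient (indexed from `0`): `a_{n+1}(ω) = ⌊1 / T^n(ω)⌋`. -/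
noncomputable def cfDigit (n : ℕ) (ω : ℝ) : ℕ := ⌊1 / (gaussMap^[n] ω)⌋₊

/-- The Gauss measure on `(0,1)`, with density `1/((log 2)(1+t))` w.r.t. Lebesgue. -/
noncomputable def gaussMeasure : Measure ℝ :=
  (volume.restrict (Set.Ioo (0 : ℝ) 1)).withDensity
    (fun t => ENNReal.ofReal (1 / (Real.log 2 * (1 + t))))

/-- The cylinder `I(a_1, …, a_n)`: irrationals in `(0,1)` whose continued fraction
expansion begins with `a_1, …, a_n`. -/
def cylinder (n : ℕ) (a : Fin n → ℕ) : Set ℝ :=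
  {ω | ω ∈ Set.Ioo (0 : ℝ) 1 ∧ Irrational ω ∧ ∀ i : Fin n, cfDigit i ω = a i}

/-- base set: irrationals in (0,1) -/
def BSet : Set ℝ := {ω | ω ∈ Set.Ioo (0:ℝ) 1 ∧ Irrational ω}

lemma gaussMap_mem_BSet {ω : ℝ} (h : ω ∈ BSet) : gaussMap ω ∈ BSet := by
  obtain ⟨⟨h0, h1⟩, hirr⟩ := h
  have hinv : Irrational (1/ω) := by simpa [one_div] using hirr.inv
  have hfr : Irrational (Int.fract (1/ω)) := by
    have := Irrational.sub_intCast hinv ⌊(1/ω)⌋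
    rwa [Int.self_sub_floor] at this
  refine ⟨⟨?_, ?_⟩, hfr⟩
  · rcases lt_or_eq_of_le (Int.fract_nonneg (1/ω)) with h | h
    · exact h
    · exact absurd (h ▸ hfr) (fun hc => hc ⟨0, by simp⟩)
  · exact Int.fract_lt_one _

lemma iter_mem_BSet {ω : ℝ} (h : ω ∈ BSet) (n : ℕ) : gaussMap^[n] ω ∈ BSet := by
  induction n with
  | zero => simpa using h
  | succ n ih => rw [Function.iterate_succ_apply']; exact gaussMap_mem_BSet ih

lemma one_le_cfDigit {ω : ℝ} (h : ω ∈ BSet) (n : ℕ) : 1 ≤ cfDigit n ω := by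
  obtain ⟨⟨h0, h1⟩, _⟩ := iter_mem_BSet h n
  have : (1:ℝ) ≤ 1 / gaussMap^[n] ω := by
    rw [le_div_iff₀ h0, one_mul]; exact le_of_lt h1
  exact Nat.one_le_floor_iff _ |>.mpr (by exact_mod_cast this)

lemma cfDigit_succ (n : ℕ) (ω : ℝ) : cfDigit (n+1) ω = cfDigit n (gaussMap ω) := by
  simp [cfDigit, Function.iterate_succ_apply]

/-- characterization of first digit + shift -/
lemma digit0_and_shift {ω : ℝ} (h : ω ∈ BSet) {a : ℕ} (ha : 1 ≤ a)
    (hd : cfDigit 0 ω = a) : gaussMap ω ∈ BSet ∧ ω = 1 / (a + gaussMap ω) := by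
  obtain ⟨⟨h0, h1⟩, hirr⟩ := h
  have hinvpos : (0:ℝ) < 1/ω := by positivity
  have hfloor : (⌊(1/ω)⌋ : ℝ) = (a : ℝ) := by
    have h2 : ⌊(1/ω)⌋ = (⌊(1/ω)⌋₊ : ℤ) := Int.floor_eq_iff.mpr
      ⟨by push_cast; exact Nat.floor_le (le_of_lt hinvpos),
       by push_cast; exact Nat.lt_floor_add_one _⟩
    rw [h2]
    exact_mod_cast congrArg (Nat.cast (R := ℝ)) (by simpa [cfDigit] using hd)
  have key : gaussMap ω = 1/ω - a := by
    rw [gaussMap, Int.fract]; rw [hfloor]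
  refine ⟨gaussMap_mem_BSet ⟨⟨h0, h1⟩, hirr⟩, ?_⟩
  rw [key]
  rw [eq_div_iff (by rw [← key]; have := (gaussMap_mem_BSet ⟨⟨h0, h1⟩, hirr⟩).1.1; linarith),
    mul_add, mul_sub, one_div, mul_inv_cancel₀ (ne_of_gt h0)]
  ring
lemma mem_BSet_inv_add {t : ℝ} (ht : t ∈ BSet) {a : ℕ} (ha : 1 ≤ a) :
    (1 / ((a:ℝ) + t)) ∈ BSet ∧ cfDigit 0 (1/((a:ℝ)+t)) = a ∧ gaussMap (1/((a:ℝ)+t)) = t := by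
  obtain ⟨⟨h0, h1⟩, hirr⟩ := ht
  have ha1 : (1:ℝ) ≤ a := by exact_mod_cast ha
  have hpos : (0:ℝ) < (a:ℝ) + t := by linarith
  have hinv : 1 / (1/((a:ℝ)+t)) = (a:ℝ) + t := by field_simp
  have hirr2 : Irrational (1/((a:ℝ)+t)) := by
    have : Irrational ((a:ℝ) + t) := Irrational.natCast_add hirr a
    simpa [one_div] using Irrational.inv this
  refine ⟨⟨⟨by positivity, ?_⟩, hirr2⟩, ?_, ?_⟩
  · rw [div_lt_one hpos]; linarith
  · simp only [cfDigit, Function.iterate_zero, id_eq, hinv]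
    rw [show (a:ℝ) + t = t + a by ring, Nat.floor_add_natCast (le_of_lt h0)]
    simp [Nat.floor_eq_zero.mpr h1]
  · rw [gaussMap, hinv, show (a:ℝ) + t = t + (a:ℤ) by push_cast; ring,
      Int.fract_add_intCast, Int.fract_eq_self.mpr ⟨le_of_lt h0, h1⟩]

/-- ω has digit prefix w -/
def pref (w : List ℕ) : Set ℝ :=
  {ω | ω ∈ BSet ∧ ∀ i : Fin w.length, cfDigit i ω = w.get i}

lemma pref_nil : pref [] = BSet := by
  ext ω; simp [pref]

lemma pref_cons {a : ℕ} (ha : 1 ≤ a) (w : List ℕ) :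
    pref (a :: w) = (fun t => 1 / ((a:ℝ) + t)) '' pref w := by
  ext ω
  constructor
  · rintro ⟨hB, hdig⟩
    have hd0 : cfDigit 0 ω = a := hdig ⟨0, Nat.succ_pos _⟩
    obtain ⟨htB, heq⟩ := digit0_and_shift hB ha hd0
    refine ⟨gaussMap ω, ⟨htB, ?_⟩, heq.symm⟩
    intro i
    have := hdig ⟨i + 1, Nat.succ_lt_succ i.isLt⟩
    rw [cfDigit_succ] at this
    exact this
  · rintro ⟨t, ⟨htB, hdig⟩, rfl⟩
    obtain ⟨hB, hd0, hshift⟩ := mem_BSet_inv_add htB ha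
    refine ⟨hB, ?_⟩
    rintro ⟨i, hi⟩
    cases i with
    | zero => exact hd0
    | succ i =>
      rw [cfDigit_succ, hshift]
      exact hdig ⟨i, Nat.lt_of_succ_lt_succ hi⟩

/-- the Möbius map associated to a word (foldr of t ↦ 1/(a+t)) -/
noncomputable def gfun (w : List ℕ) (t : ℝ) : ℝ := w.foldr (fun a s => 1 / ((a:ℝ) + s)) t

lemma pref_eq_image (w : List ℕ) (hw : ∀ d ∈ w, 1 ≤ d) :
    pref w = gfun w '' BSet := by
  induction w with
  | nil => rw [pref_nil]; ext; simp [gfun]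
  | cons a w ih =>
    rw [pref_cons (hw a (List.mem_cons_self)) w,
      ih (fun d hd => hw d (List.mem_cons_of_mem a hd)), ← Set.image_comp]
    rfl

/-- continuant matrix (A,B,C,D): gfun w t = (A+Bt)/(C+Dt) -/
def cmat : List ℕ → ℕ × ℕ × ℕ × ℕ
  | [] => (0, 1, 1, 0)
  | a :: w =>
    let m := cmat w
    (m.2.2.1, m.2.2.2, m.1 + a * m.2.2.1, m.2.1 + a * m.2.2.2)

def mA (w : List ℕ) : ℕ := (cmat w).1
def mB (w : List ℕ) : ℕ := (cmat w).2.1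
def mC (w : List ℕ) : ℕ := (cmat w).2.2.1
def mD (w : List ℕ) : ℕ := (cmat w).2.2.2

lemma cmat_cons (a : ℕ) (w : List ℕ) :
    mA (a :: w) = mC w ∧ mB (a :: w) = mD w ∧
    mC (a :: w) = mA w + a * mC w ∧ mD (a :: w) = mB w + a * mD w := by
  simp [mA, mB, mC, mD, cmat]

lemma one_le_mC (w : List ℕ) (hw : ∀ d ∈ w, 1 ≤ d) : 1 ≤ mC w := by
  induction w with
  | nil => simp [mC, cmat]
  | cons a w ih =>
    have ha := hw a (List.mem_cons_self)
    have hC := ih (fun d hd => hw d (List.mem_cons_of_mem a hd))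
    have := (cmat_cons a w).2.2.1
    rw [this]
    calc 1 ≤ a * mC w := Nat.one_le_iff_ne_zero.mpr (by positivity)
    _ ≤ mA w + a * mC w := Nat.le_add_left _ _

lemma cmat_det (w : List ℕ) :
    (Even w.length → mB w * mC w = mA w * mD w + 1) ∧
    (¬ Even w.length → mA w * mD w = mB w * mC w + 1) := by
  induction w with
  | nil => simp [mA, mB, mC, mD, cmat]
  | cons a w ih =>
    obtain ⟨h1, h2, h3, h4⟩ := cmat_cons a w
    constructor
    · intro he
      have ho : ¬ Even w.length := by
        simpa [Nat.even_add_one] using he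
      rw [h1, h2, h3, h4]
      have := ih.2 ho
      ring_nf
      nlinarith [ih.2 ho]
    · intro ho
      have he : Even w.length := by
        rcases Nat.even_or_odd w.length with h | h
        · exact h
        · exact absurd (by simpa [Nat.even_add_one] using h.add_one) ho
      rw [h1, h2, h3, h4]
      nlinarith [ih.1 he]

lemma gfun_eq (w : List ℕ) (hw : ∀ d ∈ w, 1 ≤ d) {t : ℝ} (ht : 0 ≤ t) :
    (0:ℝ) < mC w + mD w * t ∧
    gfun w t = (mA w + mB w * t) / (mC w + mD w * t) := by
  induction w with
  | nil => simp [gfun, mA, mB, mC, mD, cmat]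
  | cons a w ih =>
    obtain ⟨hpos, heq⟩ := ih (fun d hd => hw d (List.mem_cons_of_mem a hd))
    have ha : 1 ≤ a := hw a (List.mem_cons_self)
    obtain ⟨h1, h2, h3, h4⟩ := cmat_cons a w
    have ha1 : (1:ℝ) ≤ a := by exact_mod_cast ha
    have hne1 : ((mC w:ℝ) + mD w * t) ≠ 0 := ne_of_gt hpos
    have hden2 : (0:ℝ) < (mA w + a * mC w) + (mB w + a * mD w) * t := by
      have : ((mA w:ℝ) + a * mC w) + (mB w + a * mD w) * t
          = ((mA w:ℝ) + mB w * t) + a * ((mC w:ℝ) + mD w * t) := by ring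
      rw [this]
      have hnum : (0:ℝ) ≤ mA w + mB w * t := by positivity
      nlinarith
    have hg : (0:ℝ) ≤ gfun w t := by
      rw [heq]; exact div_nonneg (by positivity) hpos.le
    have hapos : (0:ℝ) < a + gfun w t := by linarith
    constructor
    · rw [h3, h4]; push_cast; exact hden2
    · show 1 / ((a:ℝ) + gfun w t) = _
      rw [heq, h1, h2, h3, h4]
      push_cast
      rw [eq_div_iff (ne_of_gt hden2)]
      have hapos' : (↑a + (↑(mA w) + ↑(mB w) * t) / (↑(mC w) + ↑(mD w) * t)) ≠ 0 := by
        rw [← heq]; exact ne_of_gt hapos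
      have hne2 : ((mC w:ℝ) + t * mD w) ≠ 0 := by rw [mul_comm t]; exact hne1
      field_simp
      ring

/-- endpoints of the cylinder interval -/
noncomputable def lohi : List ℕ → ℝ × ℝ
  | [] => (0, 1)
  | a :: w => (1 / ((a:ℝ) + (lohi w).2), 1 / ((a:ℝ) + (lohi w).1))

lemma image_inv_add_Ioo {a : ℕ} (ha : 1 ≤ a) {u v : ℝ} (hu : 0 ≤ u) (huv : u < v)
    (hv : v ≤ 1) :
    (fun t => 1 / ((a:ℝ) + t)) '' Set.Ioo u v = Set.Ioo (1/((a:ℝ)+v)) (1/((a:ℝ)+u)) := by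
  have ha1 : (1:ℝ) ≤ a := by exact_mod_cast ha
  ext s
  simp only [Set.mem_image, Set.mem_Ioo]
  constructor
  · rintro ⟨t, ⟨ht1, ht2⟩, rfl⟩
    constructor
    · apply one_div_lt_one_div_of_lt <;> linarith
    · apply one_div_lt_one_div_of_lt <;> linarith
  · rintro ⟨h1, h2⟩
    have hav : (0:ℝ) < a + v := by linarith
    have hau : (0:ℝ) < a + u := by linarith
    have hs0 : 0 < s := lt_trans (by positivity) h1
    have k1 : 1 < s * (a + v) := by
      rw [div_lt_iff₀ hav] at h1; linarith
    have k2 : s * (a + u) < 1 := by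
      rw [lt_div_iff₀ hau] at h2; linarith
    have t1 : 1/s - a < v := by
      rw [sub_lt_iff_lt_add, div_lt_iff₀ hs0]; linarith
    have t2 : u < 1/s - a := by
      rw [lt_sub_iff_add_lt, lt_div_iff₀ hs0]; linarith
    refine ⟨1/s - a, ⟨t2, t1⟩, ?_⟩
    have : (a:ℝ) + (1/s - a) = 1/s := by ring
    rw [this, one_div_one_div]

lemma lohi_spec (w : List ℕ) (hw : ∀ d ∈ w, 1 ≤ d) :
    0 ≤ (lohi w).1 ∧ (lohi w).1 < (lohi w).2 ∧ (lohi w).2 ≤ 1 ∧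
    gfun w '' Set.Ioo 0 1 = Set.Ioo (lohi w).1 (lohi w).2 := by
  induction w with
  | nil =>
    refine ⟨le_refl _, one_pos, le_refl _, ?_⟩
    ext; simp [gfun, lohi]
  | cons a w ih =>
    obtain ⟨h0, hlt, h1, himg⟩ := ih (fun d hd => hw d (List.mem_cons_of_mem a hd))
    have ha : 1 ≤ a := hw a (List.mem_cons_self)
    have ha1 : (1:ℝ) ≤ a := by exact_mod_cast ha
    have e1 : lohi (a :: w) = (1 / ((a:ℝ) + (lohi w).2), 1 / ((a:ℝ) + (lohi w).1)) := rfl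
    have himg2 : gfun (a :: w) '' Set.Ioo 0 1
        = (fun t => 1/((a:ℝ)+t)) '' (gfun w '' Set.Ioo 0 1) := by
      rw [← Set.image_comp]; rfl
    rw [e1]
    refine ⟨le_of_lt (by apply div_pos one_pos; linarith), ?_, ?_, ?_⟩
    · apply one_div_lt_one_div_of_lt <;> linarith
    · rw [div_le_one (by linarith)]; linarith
    · rw [himg2, himg, image_inv_add_Ioo ha h0 hlt h1]

lemma lohi_parity (w : List ℕ) (hw : ∀ d ∈ w, 1 ≤ d) :
    (Even w.length →
      lohi w = ((mA w : ℝ)/(mC w), ((mA w : ℝ) + mB w)/((mC w : ℝ) + mD w))) ∧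
    (¬ Even w.length →
      lohi w = (((mA w : ℝ) + mB w)/((mC w : ℝ) + mD w), (mA w : ℝ)/(mC w))) := by
  induction w with
  | nil =>
    constructor
    · intro _; simp [lohi, mA, mB, mC, mD, cmat]
    · intro h; simp at h
  | cons a w ih =>
    obtain ⟨ih1, ih2⟩ := ih (fun d hd => hw d (List.mem_cons_of_mem a hd))
    have ha : 1 ≤ a := hw a (List.mem_cons_self)
    have ha1 : (1:ℝ) ≤ a := by exact_mod_cast ha
    have hC : (1:ℝ) ≤ mC w := by
      exact_mod_cast one_le_mC w (fun d hd => hw d (List.mem_cons_of_mem a hd))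
    have hD : (0:ℝ) ≤ mD w := by positivity
    have hA : (0:ℝ) ≤ mA w := by positivity
    have hB : (0:ℝ) ≤ mB w := by positivity
    obtain ⟨h1, h2, h3, h4⟩ := cmat_cons a w
    have e1 : lohi (a :: w) = (1 / ((a:ℝ) + (lohi w).2), 1 / ((a:ℝ) + (lohi w).1)) := rfl
    have c1 : ((mA (a::w) : ℝ)) = mC w := by rw [h1]
    have c2 : ((mB (a::w) : ℝ)) = mD w := by rw [h2]
    have c3 : ((mC (a::w) : ℝ)) = mA w + a * mC w := by rw [h3]; push_cast; ring
    have c4 : ((mD (a::w) : ℝ)) = mB w + a * mD w := by rw [h4]; push_cast; ring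
    have hCD : (0:ℝ) < (mC w : ℝ) + mD w := by linarith
    have hC0 : (0:ℝ) < (mC w : ℝ) := by linarith
    have key1 : 1 / ((a:ℝ) + (mA w : ℝ)/(mC w)) = (mA (a::w) : ℝ)/(mC (a::w)) := by
      rw [c1, c3]
      have : (a:ℝ) + (mA w : ℝ)/(mC w) > 0 := by positivity
      rw [div_eq_div_iff (by linarith) (by nlinarith)]
      field_simp
      ring
    have key2 : 1 / ((a:ℝ) + ((mA w : ℝ) + mB w)/((mC w : ℝ) + mD w))
        = ((mA (a::w) : ℝ) + mB (a::w))/((mC (a::w) : ℝ) + mD (a::w)) := by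
      rw [c1, c2, c3, c4]
      have : (a:ℝ) + ((mA w : ℝ) + mB w)/((mC w : ℝ) + mD w) > 0 := by positivity
      rw [div_eq_div_iff (by linarith) (by nlinarith)]
      field_simp
      ring
    constructor
    · intro he
      have ho : ¬ Even w.length := by simpa [Nat.even_add_one] using he
      rw [e1, ih2 ho]
      simp only
      rw [key1, key2]
    · intro ho
      have he : Even w.length := by
        rcases Nat.even_or_odd w.length with h | h
        · exact h
        · exact absurd (by simpa [Nat.even_add_one] using h.add_one) ho
      rw [e1, ih1 he]
      simp only
      rw [key1, key2]

lemma gaussMeasure_ac : gaussMeasure ≪ (volume : Measure ℝ) :=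
  (withDensity_absolutelyContinuous _ _).trans
    (Measure.absolutelyContinuous_of_le Measure.restrict_le_self)

lemma gaussMeasure_countable_null {s : Set ℝ} (hs : s.Countable) : gaussMeasure s = 0 :=
  gaussMeasure_ac (hs.measure_zero _)

lemma log2_pos : (0:ℝ) < Real.log 2 := Real.log_pos (by norm_num)

lemma gaussMeasure_Ioo {u v : ℝ} (hu : 0 ≤ u) (huv : u ≤ v) (hv : v ≤ 1) :
    gaussMeasure (Set.Ioo u v)
      = ENNReal.ofReal (Real.log ((1+v)/(1+u)) / Real.log 2) := by
  rw [gaussMeasure, withDensity_apply _ measurableSet_Ioo,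
    Measure.restrict_restrict measurableSet_Ioo]
  have hinter : Set.Ioo u v ∩ Set.Ioo (0:ℝ) 1 = Set.Ioo u v := by
    apply Set.inter_eq_self_of_subset_left
    exact Set.Ioo_subset_Ioo hu hv
  rw [hinter]
  have hcont : ContinuousOn (fun t : ℝ => 1 / (Real.log 2 * (1 + t))) (Set.Icc u v) := by
    apply ContinuousOn.div continuousOn_const
    · fun_prop
    · intro t ht
      have : (0:ℝ) < 1 + t := by have := ht.1; linarith
      positivity
  have hint : IntegrableOn (fun t : ℝ => 1 / (Real.log 2 * (1 + t))) (Set.Ioo u v) :=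
    (hcont.integrableOn_Icc).mono_set Set.Ioo_subset_Icc_self
  rw [← ofReal_integral_eq_lintegral_ofReal hint]
  · congr 1
    have h1 : ∫ t in Set.Ioo u v, 1 / (Real.log 2 * (1 + t))
        = ∫ t in u..v, 1 / (Real.log 2 * (1 + t)) := by
      rw [intervalIntegral.integral_of_le huv, integral_Ioc_eq_integral_Ioo]
    rw [h1]
    have h2 : ∀ t : ℝ, 1 / (Real.log 2 * (1 + t)) = (Real.log 2)⁻¹ * (1+t)⁻¹ := by
      intro t; rw [one_div, mul_inv]
    simp_rw [h2]
    rw [intervalIntegral.integral_const_mul]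
    have h3 : ∫ t in u..v, (1+t)⁻¹ = Real.log ((1+v)/(1+u)) := by
      rw [show ∫ t in u..v, (1+t)⁻¹ = ∫ t in u..v, (fun x => x⁻¹) (1+t) from rfl,
        intervalIntegral.integral_comp_add_left (fun x => x⁻¹) 1]
      apply integral_inv
      intro h
      rcases Set.mem_uIcc.mp h with ⟨h1', _⟩ | ⟨h1', _⟩ <;> linarith
    rw [h3]
    ring
  · apply (ae_restrict_iff' measurableSet_Ioo).mpr
    filter_upwards with t ht
    have : (0:ℝ) < 1 + t := by have := ht.1; linarith
    positivity

lemma measurable_gaussMap : Measurable gaussMap := by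
  apply measurable_fract.comp
  exact measurable_const.div measurable_id

lemma measurable_cfDigit (n : ℕ) : Measurable (cfDigit n) := by
  apply Nat.measurable_floor.comp
  exact measurable_const.div (measurable_gaussMap.iterate n)

lemma measurableSet_BSet : MeasurableSet BSet := by
  have : BSet = Set.Ioo (0:ℝ) 1 ∩ (Set.range ((↑) : ℚ → ℝ))ᶜ := by
    ext ω
    constructor
    · rintro ⟨h1, h2⟩; exact ⟨h1, h2⟩
    · rintro ⟨h1, h2⟩; exact ⟨h1, h2⟩
  rw [this]
  exact measurableSet_Ioo.inter (Set.countable_range _).measurableSet.compl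

lemma measurableSet_pref (w : List ℕ) : MeasurableSet (pref w) := by
  have : pref w = BSet ∩ ⋂ i : Fin w.length, (cfDigit i) ⁻¹' {w.get i} := by
    ext ω; simp [pref, Set.mem_iInter]
  rw [this]
  exact measurableSet_BSet.inter
    (MeasurableSet.iInter fun i => (measurable_cfDigit i) (measurableSet_singleton _))

lemma gaussMeasure_pref (w : List ℕ) (hw : ∀ d ∈ w, 1 ≤ d) :
    gaussMeasure (pref w) = gaussMeasure (Set.Ioo (lohi w).1 (lohi w).2) := by
  obtain ⟨h0, hlt, h1, himg⟩ := lohi_spec w hw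
  have hsub : pref w ⊆ Set.Ioo (lohi w).1 (lohi w).2 := by
    rw [pref_eq_image w hw, ← himg]
    exact Set.image_mono (fun ω hω => hω.1)
  have hsub2 : Set.Ioo (lohi w).1 (lohi w).2 ⊆ pref w ∪ Set.range ((↑) : ℚ → ℝ) := by
    rw [← himg]
    rintro s ⟨t, ht, rfl⟩
    by_cases htirr : Irrational t
    · left
      rw [pref_eq_image w hw]
      exact ⟨t, ⟨ht, htirr⟩, rfl⟩
    · right
      simp only [Irrational, not_not] at htirr
      obtain ⟨q, rfl⟩ := htirr
      obtain ⟨hden, heq⟩ := gfun_eq w hw (le_of_lt ht.1)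
      have hdenq : ((mC w : ℚ) + mD w * q) ≠ 0 := by
        intro hc
        apply ne_of_gt hden
        exact_mod_cast congrArg ((↑) : ℚ → ℝ) hc
      refine ⟨((mA w : ℚ) + mB w * q) / ((mC w : ℚ) + mD w * q), ?_⟩
      rw [heq]
      push_cast
      rfl
  apply le_antisymm
  · exact measure_mono hsub
  · calc gaussMeasure (Set.Ioo (lohi w).1 (lohi w).2)
        ≤ gaussMeasure (pref w) + gaussMeasure (Set.range ((↑) : ℚ → ℝ)) :=
          le_trans (measure_mono hsub2) (measure_union_le _ _)
      _ = gaussMeasure (pref w) := by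
          rw [gaussMeasure_countable_null (Set.countable_range _), add_zero]

/-- the key natural number quantity -/
def RQ (w : List ℕ) : ℕ :=
  if Even w.length then (mA w + mC w) * (mC w + mD w)
  else (mA w + mB w + mC w + mD w) * mC w

lemma gaussMeasure_pref_eq (w : List ℕ) (hw : ∀ d ∈ w, 1 ≤ d) :
    gaussMeasure (pref w)
      = ENNReal.ofReal (Real.log (((RQ w : ℝ) + 1)/(RQ w)) / Real.log 2) := by
  obtain ⟨h0, hlt, h1, _⟩ := lohi_spec w hw
  rw [gaussMeasure_pref w hw, gaussMeasure_Ioo h0 (le_of_lt hlt) h1]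
  congr 2
  have hC : (1:ℝ) ≤ mC w := by exact_mod_cast one_le_mC w hw
  have hD : (0:ℝ) ≤ mD w := by positivity
  have hA : (0:ℝ) ≤ mA w := by positivity
  have hB : (0:ℝ) ≤ mB w := by positivity
  have hCD : (0:ℝ) < (mC w : ℝ) + mD w := by linarith
  have hC0 : (0:ℝ) < (mC w : ℝ) := by linarith
  obtain ⟨hdet1, hdet2⟩ := cmat_det w
  obtain ⟨hpar1, hpar2⟩ := lohi_parity w hw
  by_cases hev : Even w.length
  · rw [hpar1 hev]
    simp only [RQ, if_pos hev]
    congr 1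
    have hd : (mB w : ℝ) * mC w = mA w * mD w + 1 := by exact_mod_cast hdet1 hev
    have hR : ((mA w + mC w) * (mC w + mD w) : ℕ) = ((mA w : ℝ) + mC w) * ((mC w:ℝ) + mD w) := by
      push_cast; ring
    rw [hR]
    rw [div_eq_div_iff (by positivity) (by positivity)]
    field_simp
    nlinarith [hd]
  · rw [hpar2 hev]
    simp only [RQ, if_neg hev]
    congr 1
    have hd : (mA w : ℝ) * mD w = mB w * mC w + 1 := by exact_mod_cast hdet2 hev
    have hR : ((mA w + mB w + mC w + mD w) * mC w : ℕ)
        = ((mA w : ℝ) + mB w + mC w + mD w) * (mC w:ℝ) := by push_cast; ring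
    rw [hR]
    rw [div_eq_div_iff (by positivity) (by positivity)]
    field_simp
    nlinarith [hd]

lemma one_le_RQ (w : List ℕ) (hw : ∀ d ∈ w, 1 ≤ d) : 1 ≤ RQ w := by
  have hC := one_le_mC w hw
  rw [RQ]
  split
  · calc 1 = 1 * 1 := rfl
    _ ≤ (mA w + mC w) * (mC w + mD w) :=
        Nat.mul_le_mul (le_trans hC (Nat.le_add_left _ _)) (le_trans hC (Nat.le_add_right _ _))
  · calc 1 = 1 * 1 := rfl
    _ ≤ (mA w + mB w + mC w + mD w) * mC w :=
        Nat.mul_le_mul (le_trans hC (by omega)) hC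

lemma cmat_mono {w' w : List ℕ} (h : List.Forall₂ (· ≤ ·) w' w) :
    mA w' ≤ mA w ∧ mB w' ≤ mB w ∧ mC w' ≤ mC w ∧ mD w' ≤ mD w := by
  induction h with
  | nil => simp
  | @cons a' a w' w hle hf ih =>
    obtain ⟨iA, iB, iC, iD⟩ := ih
    obtain ⟨h1, h2, h3, h4⟩ := cmat_cons a' w'
    obtain ⟨g1, g2, g3, g4⟩ := cmat_cons a w
    refine ⟨?_, ?_, ?_, ?_⟩
    · rw [h1, g1]; exact iC
    · rw [h2, g2]; exact iD
    · rw [h3, g3]; exact Nat.add_le_add iA (Nat.mul_le_mul hle iC)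
    · rw [h4, g4]; exact Nat.add_le_add iB (Nat.mul_le_mul hle iD)

lemma RQ_mono {w' w : List ℕ} (h : List.Forall₂ (· ≤ ·) w' w) : RQ w' ≤ RQ w := by
  obtain ⟨iA, iB, iC, iD⟩ := cmat_mono h
  rw [RQ, RQ, h.length_eq]
  split
  · exact Nat.mul_le_mul (by omega) (by omega)
  · exact Nat.mul_le_mul (by omega) iC

lemma pref_measure_le {w' w : List ℕ} (hw' : ∀ d ∈ w', 1 ≤ d)
    (h : List.Forall₂ (· ≤ ·) w' w) :
    gaussMeasure (pref w) ≤ gaussMeasure (pref w') := by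
  have hw : ∀ d ∈ w, 1 ≤ d := by
    intro d hd
    obtain ⟨i, hi2⟩ := List.mem_iff_get.mp hd
    have hlen : w'.length = w.length := h.length_eq
    have := h.get (by omega : (i : ℕ) < w'.length) i.isLt
    calc 1 ≤ w'.get ⟨i, by omega⟩ := hw' _ (List.get_mem _ _)
    _ ≤ w.get ⟨i, i.isLt⟩ := this
    _ = d := by rw [hi2]
  rw [gaussMeasure_pref_eq w hw, gaussMeasure_pref_eq w' hw']
  apply ENNReal.ofReal_le_ofReal
  have h1 : (1:ℝ) ≤ RQ w' := by exact_mod_cast one_le_RQ w' hw'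
  have h2 : (RQ w' : ℝ) ≤ RQ w := by exact_mod_cast RQ_mono h
  have hlog : Real.log (((RQ w:ℝ)+1)/RQ w) ≤ Real.log (((RQ w':ℝ)+1)/RQ w') := by
    apply Real.log_le_log (by apply div_pos <;> linarith)
    rw [div_le_div_iff₀ (by linarith) (by linarith)]
    nlinarith
  exact div_le_div_of_nonneg_right hlog (le_of_lt log2_pos)

lemma gaussMeasure_compl_Ioo : gaussMeasure ((Set.Ioo (0:ℝ) 1)ᶜ) = 0 := by
  rw [gaussMeasure, withDensity_apply _ measurableSet_Ioo.compl,
    Measure.restrict_restrict measurableSet_Ioo.compl, Set.compl_inter_self,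
    Measure.restrict_empty, lintegral_zero_measure]

lemma gaussMeasure_inter_Ioo (t : Set ℝ) :
    gaussMeasure t = gaussMeasure (t ∩ Set.Ioo 0 1) := by
  apply le_antisymm
  · calc gaussMeasure t
        ≤ gaussMeasure (t ∩ Set.Ioo 0 1) + gaussMeasure (t ∩ (Set.Ioo (0:ℝ) 1)ᶜ) := by
          conv_lhs => rw [← Set.inter_union_compl t (Set.Ioo 0 1)]
          exact measure_union_le _ _
    _ = gaussMeasure (t ∩ Set.Ioo 0 1) := by
        rw [measure_mono_null Set.inter_subset_right gaussMeasure_compl_Ioo, add_zero]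
  · exact measure_mono Set.inter_subset_left

lemma gaussMeasure_Ioo01_ne_top : gaussMeasure (Set.Ioo (0:ℝ) 1) ≠ ⊤ := by
  rw [gaussMeasure_Ioo (le_refl 0) zero_le_one (le_refl 1)]
  exact ENNReal.ofReal_ne_top

/-- hit set and avoid set -/
def HitS (n j : ℕ) : Set ℝ := {ω | ω ∈ BSet ∧ ∃ i < n, cfDigit i ω = j}
def AvoidS (n j : ℕ) : Set ℝ := {ω | ω ∈ BSet ∧ ∀ i < n, cfDigit i ω ≠ j}

lemma measurableSet_HitS (n j : ℕ) : MeasurableSet (HitS n j) := by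
  have : HitS n j = BSet ∩ ⋃ i ∈ Set.Iio n, (cfDigit i) ⁻¹' {j} := by
    ext ω; simp [HitS, Set.mem_iUnion]
  rw [this]
  exact measurableSet_BSet.inter
    (MeasurableSet.biUnion (Set.to_countable _)
      fun i _ => (measurable_cfDigit i) (measurableSet_singleton _))

lemma measurableSet_AvoidS (n j : ℕ) : MeasurableSet (AvoidS n j) := by
  have : AvoidS n j = BSet ∩ ⋂ i ∈ Set.Iio n, ((cfDigit i) ⁻¹' {j})ᶜ := by
    ext ω; simp [AvoidS, Set.mem_iInter]
  rw [this]
  exact measurableSet_BSet.inter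
    (MeasurableSet.biInter (Set.to_countable _)
      fun i _ => ((measurable_cfDigit i) (measurableSet_singleton _)).compl)

/-- words of length n avoiding j with positive digits -/
def WT (n j : ℕ) : Type := {w : Fin n → ℕ // (∀ i, 1 ≤ w i) ∧ ∀ i, w i ≠ j}

instance (n j : ℕ) : Countable (WT n j) := by
  unfold WT; infer_instance

lemma AvoidS_eq_iUnion (n j : ℕ) :
    AvoidS n j = ⋃ w : WT n j, pref (List.ofFn w.1) := by
  ext ω
  simp only [Set.mem_iUnion]
  constructor
  · rintro ⟨hB, havoid⟩
    refine ⟨⟨fun i => cfDigit i ω, fun i => one_le_cfDigit hB i,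
      fun i => havoid i i.isLt⟩, hB, ?_⟩
    intro i
    simp [List.get_ofFn]
  · rintro ⟨w, hB, hdig⟩
    refine ⟨hB, fun i hi hc => w.2.2 ⟨i, hi⟩ ?_⟩
    have := hdig ⟨i, by simpa using hi⟩
    simp [List.get_ofFn] at this
    rw [← this, ← hc]

lemma pref_disjoint (n j : ℕ) :
    Pairwise (Function.onFun Disjoint fun w : WT n j => pref (List.ofFn w.1)) := by
  intro w w' hne
  rw [Function.onFun, Set.disjoint_left]
  rintro ω ⟨hB, hd⟩ ⟨hB', hd'⟩
  apply hne
  apply Subtype.ext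
  funext i
  have h1 := hd ⟨i, by simpa using i.isLt⟩
  have h2 := hd' ⟨i, by simpa using i.isLt⟩
  simp [List.get_ofFn] at h1 h2
  rw [← h1, ← h2]

lemma gaussMeasure_AvoidS (n j : ℕ) :
    gaussMeasure (AvoidS n j) = ∑' w : WT n j, gaussMeasure (pref (List.ofFn w.1)) := by
  rw [AvoidS_eq_iUnion]
  exact measure_iUnion (pref_disjoint n j) (fun w => measurableSet_pref _)

lemma forall₂_ofFn {n : ℕ} {f g : Fin n → ℕ} (h : ∀ i, f i ≤ g i) :
    List.Forall₂ (· ≤ ·) (List.ofFn f) (List.ofFn g) := by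
  rw [List.forall₂_iff_get]
  refine ⟨by simp, ?_⟩
  intro i h1 h2
  simp [List.get_ofFn]
  exact h _

lemma avoid_le {n x y : ℕ} (hx : 1 ≤ x) (hxy : x < y) :
    gaussMeasure (AvoidS n x) ≤ gaussMeasure (AvoidS n y) := by
  rw [gaussMeasure_AvoidS, gaussMeasure_AvoidS]
  set Φ : WT n x → WT n y := fun w =>
    ⟨fun i => if w.1 i = y then x else w.1 i,
     fun i => by dsimp only; split <;> [exact hx; exact w.2.1 i],
     fun i => by dsimp only; split <;> [omega; exact fun hc => (by omega : False)]⟩ with hΦ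
  have hinj : Function.Injective Φ := by
    intro w w' he
    apply Subtype.ext
    funext i
    have h1 : (Φ w).1 i = (Φ w').1 i := by rw [he]
    simp only [hΦ] at h1
    by_cases hy : w.1 i = y <;> by_cases hy' : w'.1 i = y
    · rw [hy, hy']
    · rw [if_pos hy, if_neg hy'] at h1
      exact absurd h1.symm (w'.2.2 i)
    · rw [if_neg hy, if_pos hy'] at h1
      exact absurd h1 (w.2.2 i)
    · rwa [if_neg hy, if_neg hy'] at h1
  have hle : ∀ w : WT n x, gaussMeasure (pref (List.ofFn w.1))
      ≤ gaussMeasure (pref (List.ofFn (Φ w).1)) := by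
    intro w
    apply pref_measure_le
    · intro d hd
      simp only [List.mem_ofFn] at hd
      obtain ⟨i, rfl⟩ := hd
      exact (Φ w).2.1 i
    · apply forall₂_ofFn
      intro i
      simp only [hΦ]
      split
      · omega
      · exact le_refl _
  calc ∑' w : WT n x, gaussMeasure (pref (List.ofFn w.1))
      ≤ ∑' w : WT n x, gaussMeasure (pref (List.ofFn (Φ w).1)) := ENNReal.tsum_le_tsum hle
    _ ≤ ∑' v : WT n y, gaussMeasure (pref (List.ofFn v.1)) :=
        ENNReal.tsum_comp_le_tsum_of_injective hinj _

lemma HitS_union_AvoidS (n j : ℕ) : HitS n j ∪ AvoidS n j = BSet := by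
  ext ω
  simp only [HitS, AvoidS, Set.mem_union, Set.mem_setOf_eq]
  constructor
  · rintro (⟨h, _⟩ | ⟨h, _⟩) <;> exact h
  · intro hB
    by_cases hhit : ∃ i < n, cfDigit i ω = j
    · exact Or.inl ⟨hB, hhit⟩
    · push_neg at hhit
      exact Or.inr ⟨hB, hhit⟩

lemma HitS_disjoint_AvoidS (n j : ℕ) : Disjoint (HitS n j) (AvoidS n j) := by
  rw [Set.disjoint_left]
  rintro ω ⟨hB, i, hi, hd⟩ ⟨hB', hav⟩
  exact hav i hi hd

lemma gaussMeasure_HitS_add (n j : ℕ) :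
    gaussMeasure (HitS n j) + gaussMeasure (AvoidS n j) = gaussMeasure BSet := by
  rw [← measure_union (HitS_disjoint_AvoidS n j) (measurableSet_AvoidS n j),
    HitS_union_AvoidS]


lemma statement_set_eq (n j : ℕ) :
    {ω : ℝ | Irrational ω ∧ ∃ k ∈ Finset.Icc 1 n, cfDigit (k - 1) ω = j} ∩ Set.Ioo 0 1
      = HitS n j := by
  ext ω
  simp only [Set.mem_inter_iff, Set.mem_setOf_eq, HitS, BSet, Finset.mem_Icc]
  constructor
  · rintro ⟨⟨hirr, k, ⟨hk1, hk2⟩, hd⟩, hIoo⟩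
    exact ⟨⟨hIoo, hirr⟩, k-1, by omega, hd⟩
  · rintro ⟨⟨hIoo, hirr⟩, i, hi, hd⟩
    exact ⟨⟨hirr, i+1, ⟨by omega, by omega⟩, by simpa using hd⟩, hIoo⟩

theorem gauss_measure_hitting_antitone
    (n : ℕ) (hn : 1 ≤ n) (x y : ℕ) (hx : 1 ≤ x) (hxy : x < y) :
    gaussMeasure {ω : ℝ | Irrational ω ∧ ∃ k ∈ Finset.Icc 1 n, cfDigit (k - 1) ω = y}
      ≤ gaussMeasure {ω : ℝ | Irrational ω ∧ ∃ k ∈ Finset.Icc 1 n, cfDigit (k - 1) ω = x} := by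
  have e1 : gaussMeasure {ω : ℝ | Irrational ω ∧ ∃ k ∈ Finset.Icc 1 n, cfDigit (k - 1) ω = y}
      = gaussMeasure (HitS n y) := by
    rw [gaussMeasure_inter_Ioo, statement_set_eq]
  have e2 : gaussMeasure {ω : ℝ | Irrational ω ∧ ∃ k ∈ Finset.Icc 1 n, cfDigit (k - 1) ω = x}
      = gaussMeasure (HitS n x) := by
    rw [gaussMeasure_inter_Ioo, statement_set_eq]
  rw [e1, e2]
  have hfin : gaussMeasure (AvoidS n y) ≠ ⊤ :=
    ne_top_of_le_ne_top gaussMeasure_Ioo01_ne_top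
      (measure_mono (fun ω h => h.1.1))
  apply (ENNReal.add_le_add_iff_right hfin).mp
  calc gaussMeasure (HitS n y) + gaussMeasure (AvoidS n y)
      = gaussMeasure BSet := gaussMeasure_HitS_add n y
    _ = gaussMeasure (HitS n x) + gaussMeasure (AvoidS n x) := (gaussMeasure_HitS_add n x).symm
    _ ≤ gaussMeasure (HitS n x) + gaussMeasure (AvoidS n y) :=
        add_le_add le_rfl (avoid_le hx hxy)
end

section
/- Let (Ω, 𝓕, P) be a probability space, let A_1, …, A_n be measurable sets, and let N_A(ω) = Σ_{i=1}^n 1_{A_i}(ω). Then for every 1 ≤ k ≤ n, P(N_A ≥ k) = Σ_{r=k}^n (−1)^{r−k} · C(r−1, k−1) · Σ_{1 ≤ i_1 < ⋯ < i_r ≤ n} P(A_{i_1} ∩ ⋯ ∩ A_{i_r}). -/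
open Finset

-- alternating sum lemma
lemma altzero (t m : ℕ) (h : t < m) :
    ∑ j ∈ Icc t m, (-1:ℝ)^(j-t) * (j.choose t) * (m.choose j) = 0 := by
  have hre : Icc t m = (range (m - t + 1)).map ⟨fun i => t + i, add_right_injective t⟩ := by
    ext x
    simp only [Finset.mem_Icc, mem_map, mem_range, Function.Embedding.coeFn_mk, Nat.lt_succ_iff]
    constructor
    · rintro ⟨h1, h2⟩; exact ⟨x - t, by omega, by omega⟩
    · rintro ⟨i, hi, rfl⟩; omega
  rw [hre, sum_map]
  simp only [Function.Embedding.coeFn_mk]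
  have key : ∀ i ∈ range (m - t + 1),
      (-1:ℝ)^(t + i - t) * ((t+i).choose t) * (m.choose (t+i))
        = (m.choose t : ℝ) * ((-1:ℝ)^i * ((m-t).choose i)) := by
    intro i hi
    simp only [mem_range] at hi
    have h1 : m.choose (t+i) * (t+i).choose t = m.choose t * (m - t).choose i := by
      have := Nat.choose_mul (n := m) (k := t + i) (s := t) (by omega)
      simpa using this
    have h2 : t + i - t = i := by omega
    rw [h2]
    have := congrArg (fun x : ℕ => (x : ℝ)) h1
    push_cast at this
    linear_combination ((-1:ℝ)^i) * this
  rw [sum_congr rfl key, ← mul_sum]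
  have h0 : (∑ i ∈ range (m - t + 1), ((-1:ℝ)^i * ((m-t).choose i))) = 0 := by
    have := Int.alternating_sum_range_choose_of_ne (n := m - t) (by omega)
    have := congrArg (fun x : ℤ => (x : ℝ)) this
    push_cast at this
    convert this using 2
  rw [h0, mul_zero]

lemma keysum (k : ℕ) (hk : 1 ≤ k) : ∀ m, k ≤ m →
    ∑ r ∈ Icc k m, (-1:ℝ)^(r-k) * ((r-1).choose (k-1)) * (m.choose r) = 1 := by
  intro m hm
  induction m, hm using Nat.le_induction with
  | base =>
      rw [Icc_self, sum_singleton]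
      simp
  | succ m hm ih =>
      have hsplit : ∀ r ∈ Icc k (m+1),
          (-1:ℝ)^(r-k) * ((r-1).choose (k-1)) * ((m+1).choose r)
            = (-1:ℝ)^(r-k) * ((r-1).choose (k-1)) * (m.choose r)
              + (-1:ℝ)^(r-k) * ((r-1).choose (k-1)) * (m.choose (r-1)) := by
        intro r hr
        simp only [mem_Icc] at hr
        have h1 : (m+1).choose r = m.choose (r-1) + m.choose r := by
          obtain ⟨j, rfl⟩ : ∃ j, r = j + 1 := ⟨r - 1, by omega⟩
          rw [Nat.choose_succ_succ']
          simp [Nat.add_comm]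
        rw [h1]
        push_cast
        ring
      rw [sum_congr rfl hsplit, sum_add_distrib]
      have hS1 : ∑ r ∈ Icc k (m+1), (-1:ℝ)^(r-k) * ((r-1).choose (k-1)) * (m.choose r) = 1 := by
        rw [← Finset.insert_Icc_right_eq_Icc_add_one (by omega), sum_insert (by simp)]
        rw [ih, Nat.choose_eq_zero_of_lt (by omega : m < m + 1)]
        simp
      have hS2 : ∑ r ∈ Icc k (m+1), (-1:ℝ)^(r-k) * ((r-1).choose (k-1)) * (m.choose (r-1)) = 0 := by
        have hre : Icc k (m+1) = (Icc (k-1) m).map ⟨fun i => i + 1, add_left_injective 1⟩ := by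
          ext x
          simp only [Finset.mem_Icc, mem_map, Function.Embedding.coeFn_mk]
          constructor
          · rintro ⟨h1, h2⟩; exact ⟨x - 1, ⟨by omega, by omega⟩, by omega⟩
          · rintro ⟨i, hi, rfl⟩; omega
        rw [hre, sum_map]
        simp only [Function.Embedding.coeFn_mk, Nat.add_sub_cancel]
        have : ∀ j ∈ Icc (k-1) m,
            (-1:ℝ)^(j+1-k) * (j.choose (k-1)) * (m.choose j)
              = (-1:ℝ)^(j-(k-1)) * (j.choose (k-1)) * (m.choose j) := by
          intro j hj
          simp only [mem_Icc] at hj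
          have he : j + 1 - k = j - (k-1) := by omega
          rw [he]
        rw [sum_congr rfl this]
        exact altzero (k-1) m (by omega)
      rw [hS1, hS2, add_zero]

open MeasureTheory Filter

open scoped Classical in
theorem inclusion_exclusion_at_least_k
    {Ω : Type*} [MeasurableSpace Ω] (P : Measure Ω) [IsProbabilityMeasure P]
    (n : ℕ) (A : Fin n → Set Ω) (hA : ∀ i, MeasurableSet (A i))
    (k : ℕ) (hk1 : 1 ≤ k) (hkn : k ≤ n) :
    (P {ω | k ≤ (Finset.univ.filter (fun i : Fin n => ω ∈ A i)).card}).toReal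
      = ∑ r ∈ Finset.Icc k n, (-1 : ℝ) ^ (r - k) * (Nat.choose (r - 1) (k - 1) : ℝ) *
          ∑ s ∈ Finset.powersetCard r (Finset.univ : Finset (Fin n)),
            (P (⋂ i ∈ s, A i)).toReal := by
  set E := {ω | k ≤ (Finset.univ.filter (fun i : Fin n => ω ∈ A i)).card} with hE
  have hInter : ∀ s : Finset (Fin n), MeasurableSet (⋂ i ∈ s, A i) :=
    fun s => MeasurableSet.biInter (Set.to_countable _) (fun i _ => hA i)
  have hEeq : E = ⋃ s ∈ Finset.powersetCard k (Finset.univ : Finset (Fin n)), ⋂ i ∈ s, A i := by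
    ext ω
    simp only [hE, Set.mem_setOf_eq, Set.mem_iUnion, Set.mem_iInter,
      Finset.mem_powersetCard, exists_prop]
    constructor
    · intro h
      obtain ⟨s, hs, hcard⟩ := Finset.exists_subset_card_eq h
      exact ⟨s, ⟨Finset.subset_univ s, hcard⟩, fun i hi => (Finset.mem_filter.1 (hs hi)).2⟩
    · rintro ⟨s, ⟨-, hcard⟩, hs⟩
      calc k = s.card := hcard.symm
        _ ≤ _ := Finset.card_le_card
            (fun i hi => Finset.mem_filter.2 ⟨Finset.mem_univ i, hs i hi⟩)
  have hEm : MeasurableSet E := by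
    rw [hEeq]
    exact (Finset.powersetCard k Finset.univ).measurableSet_biUnion (fun s _ => hInter s)
  have hint : ∀ S : Set Ω, MeasurableSet S →
      (P S).toReal = ∫ ω, S.indicator (fun _ => (1:ℝ)) ω ∂P := by
    intro S hS
    rw [integral_indicator_const _ hS, smul_eq_mul, mul_one]
    rfl
  -- rewrite RHS as an integral
  have hRHS : (∑ r ∈ Finset.Icc k n, (-1 : ℝ) ^ (r - k) * (Nat.choose (r - 1) (k - 1) : ℝ) *
          ∑ s ∈ Finset.powersetCard r (Finset.univ : Finset (Fin n)),
            (P (⋂ i ∈ s, A i)).toReal)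
      = ∫ ω, (∑ r ∈ Finset.Icc k n, ∑ s ∈ Finset.powersetCard r (Finset.univ : Finset (Fin n)),
          (-1 : ℝ) ^ (r - k) * (Nat.choose (r - 1) (k - 1) : ℝ) *
          (⋂ i ∈ s, A i).indicator (fun _ => (1:ℝ)) ω) ∂P := by
    rw [integral_finset_sum]
    · apply Finset.sum_congr rfl
      intro r _
      rw [integral_finset_sum]
      · rw [Finset.mul_sum]
        apply Finset.sum_congr rfl
        intro s _
        rw [MeasureTheory.integral_const_mul, ← hint _ (hInter s)]
      · exact fun s _ => ((integrable_const (1:ℝ)).indicator (hInter s)).const_mul _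
    · intro r _
      exact integrable_finset_sum _
        (fun s _ => ((integrable_const (1:ℝ)).indicator (hInter s)).const_mul _)
  rw [hRHS, hint E hEm]
  apply integral_congr_ae
  filter_upwards with ω
  -- pointwise identity
  set T := Finset.univ.filter (fun i : Fin n => ω ∈ A i) with hT
  have hind : ∀ s : Finset (Fin n),
      (⋂ i ∈ s, A i).indicator (fun _ => (1:ℝ)) ω = if s ⊆ T then 1 else 0 := by
    intro s
    rw [Set.indicator_apply]
    congr 1
    simp only [Set.mem_iInter, eq_iff_iff, hT]
    constructor
    · intro h i hi
      exact Finset.mem_filter.2 ⟨Finset.mem_univ i, h i hi⟩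
    · intro h i hi
      exact (Finset.mem_filter.1 (h hi)).2
  have hinner : ∀ r : ℕ,
      (∑ s ∈ Finset.powersetCard r (Finset.univ : Finset (Fin n)),
        (-1 : ℝ) ^ (r - k) * (Nat.choose (r - 1) (k - 1) : ℝ) *
        (⋂ i ∈ s, A i).indicator (fun _ => (1:ℝ)) ω)
      = (-1 : ℝ) ^ (r - k) * (Nat.choose (r - 1) (k - 1) : ℝ) * (Nat.choose T.card r : ℝ) := by
    intro r
    have h1 : ∀ s ∈ Finset.powersetCard r (Finset.univ : Finset (Fin n)),
        (-1 : ℝ) ^ (r - k) * (Nat.choose (r - 1) (k - 1) : ℝ) *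
          (⋂ i ∈ s, A i).indicator (fun _ => (1:ℝ)) ω
        = if s ⊆ T then (-1 : ℝ) ^ (r - k) * (Nat.choose (r - 1) (k - 1) : ℝ) else 0 := by
      intro s _
      rw [hind s]
      split_ifs <;> ring
    rw [Finset.sum_congr rfl h1, Finset.sum_ite, Finset.sum_const, Finset.sum_const_zero, add_zero]
    have hfil : (Finset.powersetCard r (Finset.univ : Finset (Fin n))).filter (fun s => s ⊆ T)
        = Finset.powersetCard r T := by
      ext s
      simp only [Finset.mem_filter, Finset.mem_powersetCard]
      constructor
      · rintro ⟨⟨-, hc⟩, hsub⟩; exact ⟨hsub, hc⟩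
      · rintro ⟨hsub, hc⟩; exact ⟨⟨Finset.subset_univ s, hc⟩, hsub⟩
    rw [hfil, Finset.card_powersetCard, nsmul_eq_mul]
    ring
  have hsum : (∑ r ∈ Finset.Icc k n, ∑ s ∈ Finset.powersetCard r (Finset.univ : Finset (Fin n)),
      (-1 : ℝ) ^ (r - k) * (Nat.choose (r - 1) (k - 1) : ℝ) *
      (⋂ i ∈ s, A i).indicator (fun _ => (1:ℝ)) ω)
      = ∑ r ∈ Finset.Icc k n, (-1 : ℝ) ^ (r - k) * (Nat.choose (r - 1) (k - 1) : ℝ) *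
          (Nat.choose T.card r : ℝ) :=
    Finset.sum_congr rfl (fun r _ => hinner r)
  rw [hsum]
  have hmn : T.card ≤ n := by
    calc T.card ≤ (Finset.univ : Finset (Fin n)).card := Finset.card_le_univ T
      _ = n := Finset.card_univ.trans (Fintype.card_fin n)
  by_cases hkm : k ≤ T.card
  · have hmem : ω ∈ E := hkm
    rw [Set.indicator_of_mem hmem]
    have hsub : Finset.Icc k T.card ⊆ Finset.Icc k n :=
      Finset.Icc_subset_Icc_right hmn
    rw [← Finset.sum_subset hsub]
    · exact (keysum k hk1 T.card hkm).symm
    · intro r hr hr2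
      simp only [Finset.mem_Icc] at hr hr2
      have : T.card < r := by omega
      rw [Nat.choose_eq_zero_of_lt this]
      simp
  · have hmem : ω ∉ E := hkm
    rw [Set.indicator_of_notMem hmem]
    symm
    apply Finset.sum_eq_zero
    intro r hr
    simp only [Finset.mem_Icc] at hr
    rw [Nat.choose_eq_zero_of_lt (show T.card < r by omega)]
    simp
end
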